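/- If m is even and n = 2m, then there does not exist a maximal pair of orthogonal binary frequency squares of order n; that is, for any two orthogonal binary frequency squares F_1, F_2 of type (n;m), there exists a binary frequency square F of type (n;m) orthogonal to both F_1 and F_2. -/

import Mathlib

/-- A binary frequency square of type `(n;m)` with `n = 2m`. -/
def IsBinFS {n : ℕ} (m : ℕ) (F : Fin n → Fin n → Fin 2) : Prop :=
  (∀ i : Fin n, ∀ s : Fin 2, (Finset.univ.filter fun j => F i j = s).card = m) ∧
  (∀ j : Fin n, ∀ s : Fin 2, (Finset.univ.filter fun i => F i j = s).card = m)

/-- Orthogonality: every ordered pair of symbols occurs `m²` times. -/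
def OrthBin {n : ℕ} (m : ℕ) (F G : Fin n → Fin n → Fin 2) : Prop :=
  ∀ a b : Fin 2,
    (Finset.univ.filter fun x : Fin n × Fin n => F x.1 x.2 = a ∧ G x.1 x.2 = b).card = m ^ 2

open Finset

lemma exists_balanced_coloring {E : Type*} (L R : E → E)
    (hL : Function.Involutive L) (hR : Function.Involutive R)
    (hLf : ∀ e, L e ≠ e) (hRf : ∀ e, R e ≠ e) :
    ∃ c : E → Bool, (∀ e, c (L e) = !c e) ∧ (∀ e, c (R e) = !c e) := by
  classical
  set PL : Equiv.Perm E := Function.Involutive.toPerm L hL with hPL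
  set PR : Equiv.Perm E := Function.Involutive.toPerm R hR with hPR
  set σ : Equiv.Perm E := PL * PR with hσdef
  have hLinv : PL⁻¹ = PL := by ext e; rfl
  have hRinv : PR⁻¹ = PR := by ext e; rfl
  have hσ_apply : ∀ e, σ e = L (R e) := fun e => rfl
  have hconj : PL * σ * PL⁻¹ = σ⁻¹ := by
    rw [hLinv]
    ext e
    show L (L (R (L e))) = σ⁻¹ e
    rw [hL (R (L e)), hσdef, mul_inv_rev, hLinv, hRinv]
    rfl
  -- conjugation at zpow level
  have hconjL : ∀ (t : ℤ) (e : E), L ((σ ^ t) e) = (σ ^ (-t)) (L e) := by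
    intro t e
    have h1 : PL * σ ^ t * PL⁻¹ = σ ^ (-t) := by
      rw [← conj_zpow, hconj, inv_zpow, zpow_neg]
    calc L ((σ ^ t) e) = PL ((σ ^ t) (PL⁻¹ (L e))) := by
          rw [hLinv]
          show L ((σ ^ t) e) = L ((σ ^ t) (L (L e)))
          rw [hL e]
      _ = (PL * σ ^ t * PL⁻¹) (L e) := rfl
      _ = (σ ^ (-t)) (L e) := by rw [h1]
  have hRL : ∀ e, R e = L (σ e) := fun e => (hL (R e)).symm
  have hconjR : ∀ (t : ℤ) (e : E), R ((σ ^ t) e) = (σ ^ (-t)) (R e) := by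
    intro t e
    rw [hRL ((σ ^ t) e), hRL e]
    have h3 : σ ((σ ^ t) e) = (σ ^ t) (σ e) := by
      rw [← Equiv.Perm.mul_apply, ← Equiv.Perm.mul_apply]
      congr 1
      group
    rw [h3, hconjL t (σ e)]
  -- no e is in the same σ-cycle as L e
  have hfpf : ∀ e : E, ¬ σ.SameCycle e (L e) := by
    rintro e ⟨t, ht⟩
    rcases Int.even_or_odd t with ⟨u, hu⟩ | ⟨u, hu⟩
    · apply hLf ((σ ^ u) e)
      calc L ((σ ^ u) e) = (σ ^ (-u)) (L e) := hconjL u e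
        _ = (σ ^ (-u)) ((σ ^ t) e) := by rw [ht]
        _ = (σ ^ (-u + t)) e := by rw [← Equiv.Perm.mul_apply, ← zpow_add]
        _ = (σ ^ u) e := by congr 1; rw [hu]; ring
    · apply hRf ((σ ^ u) e)
      have hRe : R e = (σ ^ (t - 1)) e := by
        rw [hRL e]
        have : σ e = (σ ^ (1:ℤ)) e := by rw [zpow_one]
        rw [this, hconjL 1 e, ← ht, ← Equiv.Perm.mul_apply, ← zpow_add]
        congr 1
        ring
      calc R ((σ ^ u) e) = (σ ^ (-u)) (R e) := hconjR u e
        _ = (σ ^ (-u)) ((σ ^ (t - 1)) e) := by rw [hRe]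
        _ = (σ ^ (-u + (t - 1))) e := by rw [← Equiv.Perm.mul_apply, ← zpow_add]
        _ = (σ ^ u) e := by congr 1; rw [hu]; ring
  -- quotient by σ-cycles
  letI sc : Setoid E := ⟨σ.SameCycle,
    ⟨fun x => Equiv.Perm.SameCycle.refl σ x, fun h => h.symm, fun h h' => h.trans h'⟩⟩
  have hwd : ∀ a b : E, σ.SameCycle a b → σ.SameCycle (L a) (L b) := by
    rintro a b ⟨t, ht⟩
    exact ⟨-t, by rw [← ht]; exact (hconjL t a).symm⟩
  let φ : Quotient sc → Quotient sc := Quotient.map' L hwd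
  have hφmk : ∀ e : E, φ (Quotient.mk'' e) = Quotient.mk'' (L e) := fun e => rfl
  have hφinv : ∀ q, φ (φ q) = q := by
    intro q
    induction q using Quotient.inductionOn'
    rename_i e
    rw [hφmk, hφmk, hL e]
  have hφfpf : ∀ q, φ q ≠ q := by
    intro q
    induction q using Quotient.inductionOn'
    rename_i e
    rw [hφmk]
    intro hcon
    exact hfpf e (Quotient.exact' hcon).symm
  -- pair quotient: pair each cycle-class with its φ-image
  letI s2 : Setoid (Quotient sc) := ⟨fun q q' => q' = q ∨ q' = φ q, by
    constructor
    · intro q; exact Or.inl rfl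
    · intro q q' h
      rcases h with h | h
      · exact Or.inl h.symm
      · right; rw [h, hφinv]
    · intro a b c hab hbc
      rcases hab with h | h <;> rcases hbc with h' | h'
      · exact Or.inl (h'.trans h)
      · right; rw [h', h]
      · right; rw [h', h]
      · left; rw [h', h, hφinv]⟩
  let rep : Quotient sc → Quotient sc := fun q => Quotient.out (Quotient.mk'' (s₁ := s2) q)
  have hrep_or : ∀ q, rep q = q ∨ rep q = φ q := by
    intro q
    have h := Quotient.exact' (Quotient.out_eq' (Quotient.mk'' (s₁ := s2) q))
    rcases h with h | h
    · exact Or.inl h.symm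
    · right
      conv_rhs => rw [h]
      exact (hφinv _).symm
  have hrep_φ : ∀ q, rep (φ q) = rep q := by
    intro q
    show Quotient.out (Quotient.mk'' (s₁ := s2) (φ q)) = Quotient.out (Quotient.mk'' (s₁ := s2) q)
    congr 1
    apply Quotient.sound'
    right
    rw [hφinv]

  let cs : Quotient sc → Bool := fun q => if rep q = q then true else false
  have hcsflip : ∀ q, cs (φ q) = !(cs q) := by
    intro q
    rcases hrep_or q with h | h
    · have h1 : cs q = true := if_pos h
      have h2 : cs (φ q) = false := by
        apply if_neg
        rw [hrep_φ, h]
        exact fun hc => hφfpf q hc.symm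
      rw [h1, h2]; rfl
    · have h1 : cs q = false := by
        apply if_neg
        rw [h]
        exact hφfpf q
      have h2 : cs (φ q) = true := by
        apply if_pos
        rw [hrep_φ, h]
      rw [h1, h2]; rfl
  refine ⟨fun e => cs (Quotient.mk'' e), fun e => ?_, fun e => ?_⟩
  · show cs (Quotient.mk'' (L e)) = !(cs (Quotient.mk'' e))
    rw [← hφmk, hcsflip]
  · show cs (Quotient.mk'' (R e)) = !(cs (Quotient.mk'' e))
    have h1 : R e = L (σ e) := hRL e
    have h2 : Quotient.mk'' (s₁ := sc) (σ e) = Quotient.mk'' e := by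
      exact Quotient.sound'
        (Equiv.Perm.SameCycle.symm (⟨1, by rw [zpow_one]⟩ : σ.SameCycle e (σ e)))
    rw [h1, ← hφmk, h2, hcsflip]

lemma exists_pair_involution {α : Type*} [DecidableEq α] :
    ∀ (k : ℕ) (s : Finset α), s.card = 2 * k →
      ∃ f : α → α, ∀ x ∈ s, f x ∈ s ∧ f x ≠ x ∧ f (f x) = x := by
  intro k
  induction k with
  | zero =>
    intro s hs
    rw [Nat.mul_zero, Finset.card_eq_zero] at hs
    exact ⟨id, by simp [hs]⟩
  | succ k ih =>
    intro s hs
    have h0 : 0 < s.card := by omega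
    obtain ⟨a, ha⟩ := Finset.card_pos.mp h0
    have h1 : 0 < (s.erase a).card := by
      rw [Finset.card_erase_of_mem ha]; omega
    obtain ⟨b, hb⟩ := Finset.card_pos.mp h1
    have hba : b ≠ a := Finset.ne_of_mem_erase hb
    have hbs : b ∈ s := Finset.mem_of_mem_erase hb
    set t := (s.erase a).erase b with ht
    have htcard : t.card = 2 * k := by
      rw [ht, Finset.card_erase_of_mem hb, Finset.card_erase_of_mem ha]
      omega
    obtain ⟨f, hf⟩ := ih t htcard
    set g : α → α := fun x => if x = a then b else if x = b then a else f x with hg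
    have hga : g a = b := by simp [hg]
    have hgb : g b = a := by simp [hg, hba]
    have hgx : ∀ x, x ≠ a → x ≠ b → g x = f x := by
      intro x h1 h2; simp [hg, h1, h2]
    refine ⟨g, ?_⟩
    intro x hx
    by_cases hxa : x = a
    · subst hxa
      rw [hga, hgb]
      exact ⟨hbs, hba, rfl⟩
    · by_cases hxb : x = b
      · subst hxb
        rw [hgb, hga]
        exact ⟨ha, fun h => hba h.symm, rfl⟩
      · have hxt : x ∈ t := by
          rw [ht]; exact Finset.mem_erase.mpr ⟨hxb, Finset.mem_erase.mpr ⟨hxa, hx⟩⟩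
        obtain ⟨hm, hne, hinv⟩ := hf x hxt
        have hfa : f x ≠ a := fun h => (Finset.mem_erase.mp (Finset.mem_of_mem_erase (h ▸ hm))).1 rfl
        have hfb : f x ≠ b := fun h => (Finset.mem_erase.mp (h ▸ hm)).1 rfl
        rw [hgx x hxa hxb, hgx (f x) hfa hfb, hinv]
        exact ⟨Finset.mem_of_mem_erase (Finset.mem_of_mem_erase hm), hne, rfl⟩

lemma half_card_of_involution {α : Type*} (s : Finset α) (f : α → α) (c : α → Bool)
    (hmem : ∀ x ∈ s, f x ∈ s) (hinv : ∀ x ∈ s, f (f x) = x)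
    (hflip : ∀ x ∈ s, c (f x) = !c x) :
    2 * (s.filter fun x => c x = true).card = s.card := by
  classical
  have hbij : (s.filter fun x => c x = true).card = (s.filter fun x => c x = false).card := by
    refine Finset.card_bij' (fun x _ => f x) (fun x _ => f x) ?_ ?_ ?_ ?_
    · intro a ha
      rw [Finset.mem_filter] at ha ⊢
      exact ⟨hmem a ha.1, by rw [hflip a ha.1, ha.2]; rfl⟩
    · intro a ha
      rw [Finset.mem_filter] at ha ⊢
      exact ⟨hmem a ha.1, by rw [hflip a ha.1, ha.2]; rfl⟩
    · intro a ha
      exact hinv a (Finset.mem_filter.mp ha).1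
    · intro a ha
      exact hinv a (Finset.mem_filter.mp ha).1
  have hneg : (s.filter fun a => ¬ (c a = true)) = s.filter fun x => c x = false := by
    apply Finset.filter_congr
    intro x _
    simp
  have hsplit := Finset.card_filter_add_card_filter_not (s := s)
    (p := fun x => c x = true)
  rw [hneg] at hsplit
  omega

lemma half_card_of_involution_false {α : Type*} (s : Finset α) (f : α → α) (c : α → Bool)
    (hmem : ∀ x ∈ s, f x ∈ s) (hinv : ∀ x ∈ s, f (f x) = x)
    (hflip : ∀ x ∈ s, c (f x) = !c x) :
    2 * (s.filter fun x => c x = false).card = s.card := by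
  classical
  have h := half_card_of_involution s f (fun x => !c x) hmem hinv
    (by intro x hx; simp [hflip x hx])
  rw [← h]
  congr 2
  apply Finset.filter_congr
  intro x _
  simp

lemma card_filter_prod_snd {n : ℕ} (P : Fin n → Fin n → Prop) [∀ i j, Decidable (P i j)] :
    (Finset.univ.filter fun x : Fin n × Fin n => P x.1 x.2).card
      = ∑ j : Fin n, (Finset.univ.filter fun i => P i j).card := by
  classical
  rw [Finset.card_eq_sum_card_fiberwise
    (f := fun x : Fin n × Fin n => x.2) (t := Finset.univ) (fun x _ => Finset.mem_univ _)]
  apply Finset.sum_congr rfl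
  intro j _
  refine Finset.card_bij' (fun x _ => x.1) (fun i _ => (i, j)) ?_ ?_ ?_ ?_
  · intro a ha
    simp only [Finset.mem_filter, Finset.mem_univ, true_and] at ha ⊢
    rw [← ha.2]
    exact ha.1
  · intro a ha
    simp only [Finset.mem_filter, Finset.mem_univ, true_and] at ha
    simp [ha]
  · intro a ha
    simp only [Finset.mem_filter] at ha
    show ((a.1 : Fin n), j) = a
    rw [← ha.2]
  · intro a _
    rfl

lemma card_filter_prod_fst {n : ℕ} (P : Fin n → Fin n → Prop) [∀ i j, Decidable (P i j)] :
    (Finset.univ.filter fun x : Fin n × Fin n => P x.1 x.2).card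
      = ∑ i : Fin n, (Finset.univ.filter fun j => P i j).card := by
  classical
  rw [Finset.card_eq_sum_card_fiberwise
    (f := fun x : Fin n × Fin n => x.1) (t := Finset.univ) (fun x _ => Finset.mem_univ _)]
  apply Finset.sum_congr rfl
  intro i _
  refine Finset.card_bij' (fun x _ => x.2) (fun j _ => (i, j)) ?_ ?_ ?_ ?_
  · intro a ha
    simp only [Finset.mem_filter, Finset.mem_univ, true_and] at ha ⊢
    rw [← ha.2]
    exact ha.1
  · intro a ha
    simp only [Finset.mem_filter, Finset.mem_univ, true_and] at ha
    simp [ha]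
  · intro a ha
    simp only [Finset.mem_filter] at ha
    show ((i : Fin n), a.2) = a
    rw [← ha.2]
  · intro a _
    rfl

/-- Theorem `t:main`: for even `m` there is no maximal pair of orthogonal binary
frequency squares of order `n = 2m`: every orthogonal pair has a common
orthogonal mate. -/
theorem stmt17 (m : ℕ) (hm : Even m)
    (F₁ F₂ : Fin (2 * m) → Fin (2 * m) → Fin 2)
    (h₁ : IsBinFS m F₁) (h₂ : IsBinFS m F₂) (h₁₂ : OrthBin m F₁ F₂) :
    ∃ F : Fin (2 * m) → Fin (2 * m) → Fin 2,
      IsBinFS m F ∧ OrthBin m F₁ F ∧ OrthBin m F₂ F := by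
  classical
  obtain ⟨k, hk⟩ := hm
  -- pair up, inside each row, the cells with a common value of F₂
  have hrowcard : ∀ (i : Fin (2*m)) (β : Fin 2),
      (Finset.univ.filter fun j => F₂ i j = β).card = 2 * k := by
    intro i β; rw [h₂.1 i β]; omega
  choose f hf using fun (i : Fin (2*m)) (β : Fin 2) =>
    exists_pair_involution k _ (hrowcard i β)
  -- pair up, inside each column, the cells with a common value of F₁
  have hcolcard : ∀ (j : Fin (2*m)) (α : Fin 2),
      (Finset.univ.filter fun i => F₁ i j = α).card = 2 * k := by
    intro j α; rw [h₁.2 j α]; omega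
  choose g hg using fun (j : Fin (2*m)) (α : Fin 2) =>
    exists_pair_involution k _ (hcolcard j α)
  -- the two involutions on cells
  set L : Fin (2*m) × Fin (2*m) → Fin (2*m) × Fin (2*m) :=
    fun e => (e.1, f e.1 (F₂ e.1 e.2) e.2) with hLdef
  set R : Fin (2*m) × Fin (2*m) → Fin (2*m) × Fin (2*m) :=
    fun e => (g e.2 (F₁ e.1 e.2) e.1, e.2) with hRdef
  have hmemrow : ∀ (i j : Fin (2*m)), j ∈ Finset.univ.filter fun j' => F₂ i j' = F₂ i j :=
    fun i j => Finset.mem_filter.mpr ⟨Finset.mem_univ _, rfl⟩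
  have hmemcol : ∀ (i j : Fin (2*m)), i ∈ Finset.univ.filter fun i' => F₁ i' j = F₁ i j :=
    fun i j => Finset.mem_filter.mpr ⟨Finset.mem_univ _, rfl⟩
  -- basic facts about f
  have hfmem : ∀ (i j : Fin (2*m)), F₂ i (f i (F₂ i j) j) = F₂ i j := by
    intro i j
    have := (hf i (F₂ i j) j (hmemrow i j)).1
    exact (Finset.mem_filter.mp this).2
  have hfinv : ∀ (i j : Fin (2*m)), f i (F₂ i (f i (F₂ i j) j)) (f i (F₂ i j) j) = j := by
    intro i j
    rw [hfmem i j]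
    exact (hf i (F₂ i j) j (hmemrow i j)).2.2
  have hfne : ∀ (i j : Fin (2*m)), f i (F₂ i j) j ≠ j :=
    fun i j => (hf i (F₂ i j) j (hmemrow i j)).2.1
  have hgmem : ∀ (i j : Fin (2*m)), F₁ (g j (F₁ i j) i) j = F₁ i j := by
    intro i j
    have := (hg j (F₁ i j) i (hmemcol i j)).1
    exact (Finset.mem_filter.mp this).2
  have hginv : ∀ (i j : Fin (2*m)), g j (F₁ (g j (F₁ i j) i) j) (g j (F₁ i j) i) = i := by
    intro i j
    rw [hgmem i j]
    exact (hg j (F₁ i j) i (hmemcol i j)).2.2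
  have hgne : ∀ (i j : Fin (2*m)), g j (F₁ i j) i ≠ i :=
    fun i j => (hg j (F₁ i j) i (hmemcol i j)).2.1
  have hLinv : Function.Involutive L := by
    intro e
    show (e.1, f e.1 (F₂ e.1 (f e.1 (F₂ e.1 e.2) e.2)) (f e.1 (F₂ e.1 e.2) e.2)) = e
    rw [hfinv e.1 e.2]
  have hRinv : Function.Involutive R := by
    intro e
    show (g e.2 (F₁ (g e.2 (F₁ e.1 e.2) e.1) e.2) (g e.2 (F₁ e.1 e.2) e.1), e.2) = e
    rw [hginv e.1 e.2]
  have hLfpf : ∀ e, L e ≠ e := by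
    intro e hcon
    exact hfne e.1 e.2 (congrArg Prod.snd hcon)
  have hRfpf : ∀ e, R e ≠ e := by
    intro e hcon
    exact hgne e.1 e.2 (congrArg Prod.fst hcon)
  obtain ⟨c, hcL, hcR⟩ := exists_balanced_coloring L R hLinv hRinv hLfpf hRfpf
  -- the new square
  have hFiff0 : ∀ (i j : Fin (2*m)),
      ((if c (i, j) = true then (0 : Fin 2) else 1) = 0) ↔ c (i, j) = true := by
    intro i j
    by_cases h : c (i, j) = true <;> simp [h]
  have hFiff1 : ∀ (i j : Fin (2*m)),
      ((if c (i, j) = true then (0 : Fin 2) else 1) = 1) ↔ c (i, j) = false := by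
    intro i j
    by_cases h : c (i, j) = true <;> simp [h]
  -- flip facts specialised
  have hflipL : ∀ (i j : Fin (2*m)), c (i, f i (F₂ i j) j) = !c (i, j) :=
    fun i j => hcL (i, j)
  have hflipR : ∀ (i j : Fin (2*m)), c (g j (F₁ i j) i, j) = !c (i, j) :=
    fun i j => hcR (i, j)
  refine ⟨fun i j => if c (i, j) = true then 0 else 1, ⟨?_, ?_⟩, ?_, ?_⟩
  · -- row sums
    intro i s
    have htrue := half_card_of_involution (Finset.univ : Finset (Fin (2*m)))
      (fun j => f i (F₂ i j) j) (fun j => c (i, j))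
      (fun j _ => Finset.mem_univ _) (fun j _ => hfinv i j) (fun j _ => hflipL i j)
    have hfalse := half_card_of_involution_false (Finset.univ : Finset (Fin (2*m)))
      (fun j => f i (F₂ i j) j) (fun j => c (i, j))
      (fun j _ => Finset.mem_univ _) (fun j _ => hfinv i j) (fun j _ => hflipL i j)
    rw [Finset.card_univ, Fintype.card_fin] at htrue hfalse
    beta_reduce at htrue hfalse
    fin_cases s
    · show (Finset.univ.filter fun j =>
        (if c (i, j) = true then (0:Fin 2) else 1) = 0).card = m
      rw [Finset.filter_congr (fun j _ => hFiff0 i j)]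
      omega
    · show (Finset.univ.filter fun j =>
        (if c (i, j) = true then (0:Fin 2) else 1) = 1).card = m
      rw [Finset.filter_congr (fun j _ => hFiff1 i j)]
      omega
  · -- column sums
    intro j s
    have htrue := half_card_of_involution (Finset.univ : Finset (Fin (2*m)))
      (fun i => g j (F₁ i j) i) (fun i => c (i, j))
      (fun i _ => Finset.mem_univ _) (fun i _ => hginv i j) (fun i _ => hflipR i j)
    have hfalse := half_card_of_involution_false (Finset.univ : Finset (Fin (2*m)))
      (fun i => g j (F₁ i j) i) (fun i => c (i, j))
      (fun i _ => Finset.mem_univ _) (fun i _ => hginv i j) (fun i _ => hflipR i j)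
    rw [Finset.card_univ, Fintype.card_fin] at htrue hfalse
    beta_reduce at htrue hfalse
    fin_cases s
    · show (Finset.univ.filter fun i =>
        (if c (i, j) = true then (0:Fin 2) else 1) = 0).card = m
      rw [Finset.filter_congr (fun i _ => hFiff0 i j)]
      omega
    · show (Finset.univ.filter fun i =>
        (if c (i, j) = true then (0:Fin 2) else 1) = 1).card = m
      rw [Finset.filter_congr (fun i _ => hFiff1 i j)]
      omega
  · -- orthogonal to F₁ : count per column
    intro a b
    beta_reduce
    rw [card_filter_prod_snd (P := fun i j => F₁ i j = a ∧
      (if c (i, j) = true then (0:Fin 2) else 1) = b)]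
    have hper : ∀ j : Fin (2*m),
        (Finset.univ.filter fun i =>
          F₁ i j = a ∧ (if c (i, j) = true then (0:Fin 2) else 1) = b).card = k := by
      intro j
      rw [← Finset.filter_filter]
      set sj := Finset.univ.filter fun i => F₁ i j = a with hsj
      have hmemf : ∀ i ∈ sj, g j (F₁ i j) i ∈ sj := by
        intro i hi
        rw [hsj, Finset.mem_filter] at hi ⊢
        exact ⟨Finset.mem_univ _, by rw [hgmem i j, hi.2]⟩
      have htrue := half_card_of_involution sj
        (fun i => g j (F₁ i j) i) (fun i => c (i, j))
        hmemf (fun i _ => hginv i j) (fun i _ => hflipR i j)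
      have hfalse := half_card_of_involution_false sj
        (fun i => g j (F₁ i j) i) (fun i => c (i, j))
        hmemf (fun i _ => hginv i j) (fun i _ => hflipR i j)
      rw [hcolcard j a] at htrue hfalse
      beta_reduce at htrue hfalse
      fin_cases b
      · show (sj.filter fun i =>
          (if c (i, j) = true then (0:Fin 2) else 1) = 0).card = k
        rw [Finset.filter_congr (fun i _ => hFiff0 i j)]
        omega
      · show (sj.filter fun i =>
          (if c (i, j) = true then (0:Fin 2) else 1) = 1).card = k
        rw [Finset.filter_congr (fun i _ => hFiff1 i j)]
        omega
    rw [Finset.sum_congr rfl (fun j _ => hper j), Finset.sum_const, Finset.card_univ,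
      Fintype.card_fin, smul_eq_mul, hk]
    ring
  · -- orthogonal to F₂ : count per row
    intro a b
    beta_reduce
    rw [card_filter_prod_fst (P := fun i j => F₂ i j = a ∧
      (if c (i, j) = true then (0:Fin 2) else 1) = b)]
    have hper : ∀ i : Fin (2*m),
        (Finset.univ.filter fun j =>
          F₂ i j = a ∧ (if c (i, j) = true then (0:Fin 2) else 1) = b).card = k := by
      intro i
      rw [← Finset.filter_filter]
      set si := Finset.univ.filter fun j => F₂ i j = a with hsi
      have hmemf : ∀ j ∈ si, f i (F₂ i j) j ∈ si := by
        intro j hj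
        rw [hsi, Finset.mem_filter] at hj ⊢
        exact ⟨Finset.mem_univ _, by rw [hfmem i j, hj.2]⟩
      have htrue := half_card_of_involution si
        (fun j => f i (F₂ i j) j) (fun j => c (i, j))
        hmemf (fun j _ => hfinv i j) (fun j _ => hflipL i j)
      have hfalse := half_card_of_involution_false si
        (fun j => f i (F₂ i j) j) (fun j => c (i, j))
        hmemf (fun j _ => hfinv i j) (fun j _ => hflipL i j)
      rw [hrowcard i a] at htrue hfalse
      beta_reduce at htrue hfalse
      fin_cases b
      · show (si.filter fun j =>
          (if c (i, j) = true then (0:Fin 2) else 1) = 0).card = k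
        rw [Finset.filter_congr (fun j _ => hFiff0 i j)]
        omega
      · show (si.filter fun j =>
          (if c (i, j) = true then (0:Fin 2) else 1) = 1).card = k
        rw [Finset.filter_congr (fun j _ => hFiff1 i j)]
        omega
    rw [Finset.sum_congr rfl (fun i _ => hper i), Finset.sum_const, Finset.card_univ,
      Fintype.card_fin, smul_eq_mul, hk]
    ring
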